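/- Let G be a connected chordal graph, let X be a minimal vertex set separating a vertex u from some vertex set, let W be a connected component of G − X all of whose vertices have a path to X avoiding other components (i.e., X = N(W) ∩ X with every vertex of X having a neighbor in W). Then there exists a vertex w in W adjacent to every vertex of X. -/

import Mathlib

open SimpleGraph

variable {V : Type*}

noncomputable instance (priority := low) instFintypeSubsetOfFinite [Finite V] (s : Set V) :
    Fintype ↥s := Fintype.ofFinite _

/-- Eccentricity of a vertex: max distance to any vertex. -/
noncomputable def ecc [Fintype V] (G : SimpleGraph V) (x : V) : ℕ :=
  Finset.univ.sup (G.dist x)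

/-- Radius: minimum eccentricity. -/
noncomputable def grad [Fintype V] (G : SimpleGraph V) : ℕ :=
  sInf (Set.range (ecc G))

/-- Diameter: maximum eccentricity. -/
noncomputable def gdiam [Fintype V] (G : SimpleGraph V) : ℕ :=
  Finset.univ.sup (ecc G)

/-- The center: vertices of minimum eccentricity. -/
def center [Fintype V] (G : SimpleGraph V) : Set V :=
  {x | ecc G x = grad G}

/-- `G` has an induced cycle of length `n`. -/
def HasInducedCycle (G : SimpleGraph V) (n : ℕ) : Prop :=
  3 ≤ n ∧ ∃ f : ZMod n → V, Function.Injective f ∧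
    ∀ i j : ZMod n, G.Adj (f i) (f j) ↔ (i = j + 1 ∨ j = i + 1)

/-- `G` is `k`-chordal: no induced cycle of length greater than `k`. -/
def KChordal (G : SimpleGraph V) (k : ℕ) : Prop :=
  ∀ n, k < n → ¬ HasInducedCycle G n

section Helpers

variable {α : Type*} {Γ : SimpleGraph α}

lemma walk_prefix {u v : α} (p : Γ.Walk u v) :
    ∀ i, i ≤ p.length → ∃ q : Γ.Walk u (p.getVert i), q.length = i := by
  induction p with
  | nil =>
    intro i hi
    simp only [SimpleGraph.Walk.length_nil, Nat.le_zero] at hi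
    subst hi
    exact ⟨SimpleGraph.Walk.nil.copy rfl (SimpleGraph.Walk.getVert_zero _).symm, by simp⟩
  | cons h p ih =>
    intro i hi
    cases i with
    | zero =>
      exact ⟨SimpleGraph.Walk.nil.copy rfl (SimpleGraph.Walk.getVert_zero _).symm, by simp⟩
    | succ n =>
      obtain ⟨q, hq⟩ := ih n (by simpa using hi)
      exact ⟨(q.cons h).copy rfl (SimpleGraph.Walk.getVert_cons_succ _ _).symm, by simp [hq]⟩

lemma walk_suffix {u v : α} (p : Γ.Walk u v) :
    ∀ i, ∃ q : Γ.Walk (p.getVert i) v, q.length = p.length - i := by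
  induction p with
  | nil =>
    intro i
    refine ⟨SimpleGraph.Walk.nil.copy ?_ rfl, by simp⟩
    cases i <;> rfl
  | cons h p ih =>
    intro i
    cases i with
    | zero =>
      exact ⟨(p.cons h).copy (SimpleGraph.Walk.getVert_zero _).symm rfl, by simp⟩
    | succ n =>
      obtain ⟨q, hq⟩ := ih n
      exact ⟨q.copy (SimpleGraph.Walk.getVert_cons_succ _ _).symm rfl, by simp [hq]⟩

lemma hasInducedCycle_of_fn (G : SimpleGraph V) {n : ℕ} (hn : 4 ≤ n) (f : ℕ → V)
    (hinj : ∀ i < n, ∀ j < n, f i = f j → i = j)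
    (hadj : ∀ i, i + 1 < n → G.Adj (f i) (f (i + 1)))
    (hlast : G.Adj (f (n - 1)) (f 0))
    (hnon : ∀ i j, i < j → j < n → j ≠ i + 1 → ¬(i = 0 ∧ j = n - 1) → ¬ G.Adj (f i) (f j)) :
    HasInducedCycle G n := by
  haveI : NeZero n := ⟨by omega⟩
  haveI : Fact (1 < n) := ⟨by omega⟩
  have key : ∀ a b, a < n → b < n →
      (G.Adj (f a) (f b) ↔ (a = (b + 1) % n ∨ b = (a + 1) % n)) := by
    have half : ∀ a b, a < b → b < n →
        (G.Adj (f a) (f b) ↔ (a = (b + 1) % n ∨ b = (a + 1) % n)) := by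
      intro a b hab hbn
      have h1 : (a + 1) % n = a + 1 := Nat.mod_eq_of_lt (by omega)
      rcases Nat.lt_or_ge (b + 1) n with hb1 | hb1
      · have h2 : (b + 1) % n = b + 1 := Nat.mod_eq_of_lt hb1
        rw [h1, h2]
        constructor
        · intro h
          by_contra hcon
          push_neg at hcon
          exact hnon a b hab hbn (by omega) (by omega) h
        · rintro (h | h)
          · omega
          · subst h; exact hadj a (by omega)
      · have hbeq : b = n - 1 := by omega
        have h2 : (b + 1) % n = 0 := by
          have : b + 1 = n := by omega
          simp [this]
        rw [h1, h2]
        constructor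
        · intro h
          by_contra hcon
          push_neg at hcon
          have hba1 : b ≠ a + 1 := by omega
          exact hnon a b hab hbn hba1 (fun h0 => hcon.1 h0.1) h
        · rintro (h | h)
          · subst h; subst hbeq; exact hlast.symm
          · subst h; exact hadj a (by omega)
    intro a b han hbn
    rcases lt_trichotomy a b with h | h | h
    · exact half a b h hbn
    · subst h
      constructor
      · intro h; exact absurd h (G.irrefl)
      · intro h
        rcases h with h | h <;>
        · rcases Nat.lt_or_ge (a + 1) n with h2 | h2
          · rw [Nat.mod_eq_of_lt h2] at h; omega
          · rw [(by omega : a + 1 = n), Nat.mod_self] at h; omega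
    · rw [G.adj_comm, or_comm]
      exact half b a h han
  refine ⟨by omega, fun k => f k.val, ?_, ?_⟩
  · intro a b hab
    exact ZMod.val_injective n (hinj a.val (ZMod.val_lt a) b.val (ZMod.val_lt b) hab)
  · intro i j
    have hv : ∀ (i j : ZMod n), i = j + 1 ↔ i.val = (j.val + 1) % n := by
      intro i j
      rw [← (ZMod.val_injective n).eq_iff, ZMod.val_add, ZMod.val_one]
    rw [hv i j, hv j i]
    exact key i.val j.val (ZMod.val_lt i) (ZMod.val_lt j)

end Helpers

theorem exists_vertex_dominating_separator [Fintype V] (G : SimpleGraph V)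
    (hG : G.Connected) (hch : KChordal G 3) (X W : Set V) (hX : G.IsClique X)
    (hWX : Disjoint W X) (hWne : W.Nonempty) (hWconn : (G.induce W).Connected)
    (hWcomp : ∀ w ∈ W, ∀ v, v ∉ X → G.Adj w v → v ∈ W)
    (hN : ∀ x ∈ X, ∃ w ∈ W, G.Adj x w) :
    ∃ w ∈ W, ∀ x ∈ X, G.Adj w x := by
  classical
  by_contra hcon
  push_neg at hcon
  obtain ⟨w, hwW', hwmax⟩ :=
    Finset.exists_max_image W.toFinset
      (fun w => (X.toFinset.filter (fun z => G.Adj w z)).card)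
      (Set.toFinset_nonempty.mpr hWne)
  have hwW : w ∈ W := Set.mem_toFinset.mp hwW'
  obtain ⟨x, hxX, hnadj⟩ := hcon w hwW
  obtain ⟨a0, ha0W, ha0adj⟩ := hN x hxX
  set L : Set ℕ :=
    {k | ∃ (b : ↥W) (p : (G.induce W).Walk ⟨w, hwW⟩ b), G.Adj x ↑b ∧ p.length = k} with hLdef
  have hLne : L.Nonempty := by
    obtain ⟨p⟩ := hWconn.preconnected ⟨w, hwW⟩ ⟨a0, ha0W⟩
    exact ⟨p.length, ⟨a0, ha0W⟩, p, ha0adj, rfl⟩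
  set m := sInf L with hmdef
  obtain ⟨b, p, hbadj, hplen⟩ := Nat.sInf_mem hLne
  rw [← hmdef] at hplen
  have hmin : ∀ (b' : ↥W) (p' : (G.induce W).Walk ⟨w, hwW⟩ b'),
      G.Adj x ↑b' → m ≤ p'.length := by
    intro b' p' h
    exact Nat.sInf_le ⟨b', p', h, rfl⟩
  set Q : ℕ → V := fun i => ↑(p.getVert i) with hQdef
  have hQW : ∀ i, Q i ∈ W := fun i => (p.getVert i).2
  have hQ0 : Q 0 = w := by simp [hQdef]
  have hQm : Q m = ↑b := by
    have : p.getVert m = b := by rw [← hplen]; exact p.getVert_length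
    simp [hQdef, this]
  have hQadj : ∀ i, i < m → G.Adj (Q i) (Q (i + 1)) := by
    intro i hi
    have h2 := p.adj_getVert_succ (by omega : i < p.length)
    exact h2
  have hm0 : m ≠ 0 := by
    intro h
    apply hnadj
    have hbw : (b : V) = w := by rw [← hQm, h, hQ0]
    rw [← hbw]
    exact hbadj.symm
  have hnotS : ∀ i, i < m → ¬ G.Adj x (Q i) := by
    intro i hi hadjx
    obtain ⟨q, hq⟩ := walk_prefix p i (by omega)
    have := hmin (p.getVert i) q hadjx
    omega
  have hQind : ∀ i j, i + 1 < j → j ≤ m → ¬ G.Adj (Q i) (Q j) := by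
    intro i j hij hjm hadj'
    obtain ⟨q1, hq1⟩ := walk_prefix p i (by omega)
    obtain ⟨q2, hq2⟩ := walk_suffix p j
    have hadjW : (G.induce W).Adj (p.getVert i) (p.getVert j) := hadj'
    have := hmin b (q1.append (q2.cons hadjW)) hbadj
    rw [SimpleGraph.Walk.length_append, SimpleGraph.Walk.length_cons, hq1, hq2] at this
    omega
  have hQinj : ∀ i j, i < j → j ≤ m → Q i ≠ Q j := by
    intro i j hij hjm heq
    have hsub : p.getVert i = p.getVert j := Subtype.ext heq
    obtain ⟨q1, hq1⟩ := walk_prefix p i (by omega)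
    obtain ⟨q2, hq2⟩ := walk_suffix p j
    have := hmin b ((q1.copy rfl hsub).append q2) hbadj
    rw [SimpleGraph.Walk.length_append, SimpleGraph.Walk.length_copy, hq1, hq2] at this
    omega
  have hxW : x ∉ W := fun h => Set.disjoint_left.mp hWX h hxX
  have hstep : ∀ z ∈ X, G.Adj w z → G.Adj z (Q m) := by
    intro z hz hwz
    by_contra hne
    set j := Nat.findGreatest (fun i => G.Adj z (Q i)) m with hjdef
    have hP0 : G.Adj z (Q 0) := by rw [hQ0]; exact hwz.symm
    have hPj : G.Adj z (Q j) := by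
      rw [hjdef]
      exact Nat.findGreatest_spec (P := fun i => G.Adj z (Q i)) (Nat.zero_le m) hP0
    have hjle : j ≤ m := by rw [hjdef]; exact Nat.findGreatest_le m
    have hjgr : ∀ i, j < i → i ≤ m → ¬ G.Adj z (Q i) := by
      intro i h1 h2
      rw [hjdef] at h1
      exact Nat.findGreatest_is_greatest h1 h2
    have hjm : j < m := by
      rcases Nat.lt_or_ge j m with h | h
      · exact h
      · exfalso; apply hne; have : j = m := by omega
        rw [← this]; exact hPj
    have hzW : z ∉ W := fun h => Set.disjoint_left.mp hWX h hz
    have hxz : x ≠ z := fun h => hnadj (h ▸ hwz)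
    set n := m - j + 3 with hndef
    set f : ℕ → V := fun k => if k = 0 then x else if k = 1 then z else Q (j + k - 2)
      with hfdef
    have hf0 : f 0 = x := by simp [hfdef]
    have hf1 : f 1 = z := by simp [hfdef]
    have hf2 : ∀ k, 2 ≤ k → f k = Q (j + k - 2) := by
      intro k hk
      simp only [hfdef]
      rw [if_neg (by omega), if_neg (by omega)]
    apply hch n (by omega)
    apply hasInducedCycle_of_fn G (by omega) f
    · -- injectivity
      intro i hi k hk heq
      rcases Nat.lt_or_ge i 2 with hi2 | hi2 <;> rcases Nat.lt_or_ge k 2 with hk2 | hk2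
      · interval_cases i <;> interval_cases k
        · rfl
        · rw [hf0, hf1] at heq; exact absurd heq hxz
        · rw [hf0, hf1] at heq; exact absurd heq.symm hxz
        · rfl
      · exfalso
        have hw2 := hQW (j + k - 2)
        rw [← hf2 k hk2, ← heq] at hw2
        interval_cases i
        · rw [hf0] at hw2; exact hxW hw2
        · rw [hf1] at hw2; exact hzW hw2
      · exfalso
        have hw2 := hQW (j + i - 2)
        rw [← hf2 i hi2, heq] at hw2
        interval_cases k
        · rw [hf0] at hw2; exact hxW hw2
        · rw [hf1] at hw2; exact hzW hw2
      · rw [hf2 i hi2, hf2 k hk2] at heq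
        rcases lt_trichotomy (j + i - 2) (j + k - 2) with h | h | h
        · exact absurd heq (hQinj _ _ h (by omega))
        · omega
        · exact absurd heq.symm (hQinj _ _ h (by omega))
    · -- consecutive adjacency
      intro i hi
      rcases Nat.lt_or_ge i 2 with h2 | h2
      · interval_cases i
        · rw [hf0, hf1]; exact hX hxX hz hxz
        · rw [hf1, hf2 2 le_rfl]
          have : j + 2 - 2 = j := by omega
          rw [this]; exact hPj
      · rw [hf2 i h2, hf2 (i + 1) (by omega)]
        have h3 : j + (i + 1) - 2 = (j + i - 2) + 1 := by omega
        rw [h3]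
        exact hQadj _ (by omega)
    · -- closing edge
      rw [hf2 (n - 1) (by omega), hf0]
      have h4 : j + (n - 1) - 2 = m := by omega
      rw [h4, hQm]
      exact hbadj.symm
    · -- non-adjacency
      intro i k hik hkn hkne hcor hadjc
      rcases Nat.lt_or_ge i 2 with h2 | h2
      · interval_cases i
        · have hk1 : k ≠ n - 1 := fun h => hcor ⟨rfl, h⟩
          have hk2 : 2 ≤ k := by omega
          rw [hf0, hf2 k hk2] at hadjc
          exact hnotS (j + k - 2) (by omega) hadjc
        · have hk3 : 3 ≤ k := by omega
          rw [hf1, hf2 k (by omega)] at hadjc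
          exact hjgr (j + k - 2) (by omega) (by omega) hadjc
      · rw [hf2 i h2, hf2 k (by omega)] at hadjc
        exact hQind _ _ (by omega) (by omega) hadjc
  -- final contradiction: Q m beats w
  have hQmW : Q m ∈ W := hQW m
  have hadjQmx : G.Adj (Q m) x := by rw [hQm]; exact hbadj.symm
  have hsub : X.toFinset.filter (fun z => G.Adj w z) ⊆
      X.toFinset.filter (fun z => G.Adj (Q m) z) := by
    intro z hzmem
    rw [Finset.mem_filter, Set.mem_toFinset] at hzmem ⊢
    exact ⟨hzmem.1, (hstep z hzmem.1 hzmem.2).symm⟩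
  have hxmem : x ∈ X.toFinset.filter (fun z => G.Adj (Q m) z) := by
    rw [Finset.mem_filter, Set.mem_toFinset]
    exact ⟨hxX, hadjQmx⟩
  have hxnot : x ∉ X.toFinset.filter (fun z => G.Adj w z) := by
    rw [Finset.mem_filter]
    exact fun h => hnadj h.2
  have hlt := Finset.card_lt_card ((Finset.ssubset_iff_of_subset hsub).mpr ⟨x, hxmem, hxnot⟩)
  have hle := hwmax (Q m) (Set.mem_toFinset.mpr hQmW)
  omega
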